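/- Let Z be an algebraic subset of ℂ^m × ℂ^n with proper projection π onto ℂ^m such that π(Z) is an algebraic subset of ℂ^{m−1} × ℂ with proper projection onto ℂ^{m−1}, and let P be a compact polynomial polyhedron in ℂ^{m−1}. Then there exist s, s̃ > 0 such that Z ∩ (P × ℂ × ℂ^n) = Z ∩ (P × cl(B₁(s)) × cl(B_n(s̃))), and this set is a compact polynomial polyhedron in ℂ^m × ℂ^n; in particular it is a polynomially convex compact set. Here B_l(t) denotes the open ball of radius t in ℂ^l and cl denotes closure. -/
import Mathlib


open Set Filter Topology MvPolynomial

noncomputable section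

/-- The complex Euclidean space `ℂ^N`. -/
abbrev CE (N : ℕ) := Fin N → ℂ

/-- The natural projection `ℂ^{a+b} → ℂ^a` (onto the first `a` coordinates). -/
def projFst (a b : ℕ) (z : CE (a + b)) : CE a := fun i => z (Fin.castAdd b i)

/-- The natural projection `ℂ^{a+b} → ℂ^b` (onto the last `b` coordinates). -/
def projSnd (a b : ℕ) (z : CE (a + b)) : CE b := fun i => z (Fin.natAdd a i)

/-- The cylinder `U × ℂ^b ⊆ ℂ^{a+b}` over `U ⊆ ℂ^a`. -/
def cylOver {a : ℕ} (b : ℕ) (U : Set (CE a)) : Set (CE (a + b)) :=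
  {z | projFst a b z ∈ U}

/-- The product `U × B ⊆ ℂ^{a+b}` of `U ⊆ ℂ^a` and `B ⊆ ℂ^b`. -/
def prodSet {a b : ℕ} (U : Set (CE a)) (B : Set (CE b)) : Set (CE (a + b)) :=
  {z | projFst a b z ∈ U ∧ projSnd a b z ∈ B}

/-- The open ball of radius `r` in `ℂ = ℂ^1`. -/
def ball1 (r : ℝ) : Set (CE 1) := {w | ‖w 0‖ < r}

/-- The open Euclidean ball of radius `t` in `ℂ^l`. -/
def eball (l : ℕ) (t : ℝ) : Set (CE l) := {x | ∑ i, ‖x i‖ ^ 2 < t ^ 2}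

/-- An algebraic subset of `ℂ^N`: the common zero set of finitely many polynomials. -/
def IsAlgebraicSet {N : ℕ} (X : Set (CE N)) : Prop :=
  ∃ s : Finset (MvPolynomial (Fin N) ℂ), X = {z | ∀ p ∈ s, eval z p = 0}

/-- An analytic subset `X` of an open set `Ω ⊆ ℂ^N`: locally (at every point of `Ω`)
the common zero set of finitely many holomorphic functions. -/
def IsAnalyticSet {N : ℕ} (Ω X : Set (CE N)) : Prop :=
  X ⊆ Ω ∧ ∀ z ∈ Ω, ∃ U : Set (CE N), IsOpen U ∧ z ∈ U ∧ U ⊆ Ω ∧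
    ∃ s : Finset (CE N → ℂ), (∀ f ∈ s, AnalyticOnNhd ℂ f U) ∧
      X ∩ U = {w ∈ U | ∀ f ∈ s, f w = 0}

/-- `X` is, near `a`, a `d`-dimensional complex submanifold of `ℂ^N`: there is a local
biholomorphism straightening `X` to the linear subspace `{z : z_i = 0 for i ≥ d}`. -/
def IsSubmanifoldPtOfDim {N : ℕ} (X : Set (CE N)) (d : ℕ) (a : CE N) : Prop :=
  ∃ (V W : Set (CE N)) (φ ψ : CE N → CE N),
    IsOpen V ∧ a ∈ V ∧ IsOpen W ∧
    AnalyticOnNhd ℂ φ V ∧ AnalyticOnNhd ℂ ψ W ∧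
    MapsTo φ V W ∧ MapsTo ψ W V ∧
    (∀ x ∈ V, ψ (φ x) = x) ∧ (∀ y ∈ W, φ (ψ y) = y) ∧
    φ '' (X ∩ V) = W ∩ {z | ∀ i : Fin N, d ≤ (i : ℕ) → z i = 0}

/-- `X` is purely `k`-dimensional: every point of `X` near which `X` is a submanifold is a
point of dimension exactly `k`, and such (regular) points are dense in `X`. -/
def PureDimOf {N : ℕ} (X : Set (CE N)) (k : ℕ) : Prop :=
  (∀ a ∈ X, a ∈ closure {b | b ∈ X ∧ IsSubmanifoldPtOfDim X k b}) ∧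
  (∀ b ∈ X, ∀ d, IsSubmanifoldPtOfDim X d b → d = k)

/-- The singular locus of `X`: the points of `X` at which `X` is not locally a submanifold. -/
def singLocus {N : ℕ} (X : Set (CE N)) : Set (CE N) :=
  {a ∈ X | ¬ ∃ d, IsSubmanifoldPtOfDim X d a}

/-- An irreducible analytic subset of the open set `Ω`. -/
def IsIrreducibleAnalyticSet {N : ℕ} (Ω X : Set (CE N)) : Prop :=
  IsAnalyticSet Ω X ∧ X.Nonempty ∧
  ∀ A B : Set (CE N), IsAnalyticSet Ω A → IsAnalyticSet Ω B → X = A ∪ B → X = A ∨ X = B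

/-- `C` is an (analytic) irreducible component of the analytic set `X ⊆ Ω`:
an irreducible analytic subset of `Ω` contained in `X`, maximal among such. -/
def IsIrreducibleComponent {N : ℕ} (Ω X C : Set (CE N)) : Prop :=
  IsIrreducibleAnalyticSet Ω C ∧ C ⊆ X ∧
  ∀ C' : Set (CE N), IsIrreducibleAnalyticSet Ω C' → C ⊆ C' → C' ⊆ X → C' = C

/-- `A` is the union of some of the analytic irreducible components of `X` in `Ω`. -/
def IsUnionOfComponents {N : ℕ} (Ω X A : Set (CE N)) : Prop :=
  ∃ 𝒞 : Set (Set (CE N)), (∀ C ∈ 𝒞, IsIrreducibleComponent Ω X C) ∧ A = ⋃₀ 𝒞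

/-- The germ of the analytic set `Z` at `a` is irreducible. -/
def GermIrreducibleAt {N : ℕ} (Z : Set (CE N)) (a : CE N) : Prop :=
  ∀ U A B : Set (CE N), IsOpen U → a ∈ U → IsAnalyticSet U A → IsAnalyticSet U B →
    Z ∩ U = A ∪ B →
    (∃ V, IsOpen V ∧ a ∈ V ∧ Z ∩ V = A ∩ V) ∨ (∃ V, IsOpen V ∧ a ∈ V ∧ Z ∩ V = B ∩ V)

/-- A Nash function on the open set `U ⊆ ℂ^N`: a holomorphic function annihilated,
locally around every point of `U`, by a nonzero polynomial `P(x, f(x)) = 0`. -/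
def IsNashFn {N : ℕ} (U : Set (CE N)) (f : CE N → ℂ) : Prop :=
  AnalyticOnNhd ℂ f U ∧ ∀ x₀ ∈ U, ∃ V : Set (CE N), IsOpen V ∧ x₀ ∈ V ∧ V ⊆ U ∧
    ∃ P : MvPolynomial (Fin (N + 1)) ℂ, P ≠ 0 ∧
      ∀ x ∈ V, eval (Fin.snoc x (f x)) P = 0

/-- A Nash subset `Y` of the open set `Ω ⊆ ℂ^N`: locally (at every point of `Ω`) the common
zero set of finitely many Nash functions. -/
def IsNashSet {N : ℕ} (Ω Y : Set (CE N)) : Prop :=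
  Y ⊆ Ω ∧ ∀ y ∈ Ω, ∃ U : Set (CE N), IsOpen U ∧ y ∈ U ∧ U ⊆ Ω ∧
    ∃ s : Finset (CE N → ℂ), (∀ f ∈ s, IsNashFn U f) ∧
      Y ∩ U = {x ∈ U | ∀ f ∈ s, f x = 0}

/-- `U` is a domain of holomorphy in `ℂ^N`. -/
def IsDomainOfHolomorphy {N : ℕ} (U : Set (CE N)) : Prop :=
  IsOpen U ∧ ¬ ∃ U₁ U₂ : Set (CE N), IsOpen U₁ ∧ IsOpen U₂ ∧ U₁.Nonempty ∧
    U₁ ⊆ U ∩ U₂ ∧ IsConnected U₂ ∧ ¬ U₂ ⊆ U ∧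
    ∀ f : CE N → ℂ, AnalyticOnNhd ℂ f U →
      ∃ F : CE N → ℂ, AnalyticOnNhd ℂ F U₂ ∧ EqOn f F U₁

/-- A Runge domain in `ℂ^N`: a domain of holomorphy on which every holomorphic function can be
approximated uniformly on compact subsets by polynomials. -/
def IsRungeDomain {N : ℕ} (U : Set (CE N)) : Prop :=
  IsDomainOfHolomorphy U ∧
  ∀ f : CE N → ℂ, AnalyticOnNhd ℂ f U → ∀ K : Set (CE N), IsCompact K → K ⊆ U →
    ∀ ε : ℝ, 0 < ε → ∃ p : MvPolynomial (Fin N) ℂ, ∀ z ∈ K, ‖f z - eval z p‖ < ε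

/-- The projection `ℂ^{a+b} → ℂ^a` restricted to `X` maps `X` into `U` and is proper over `U`. -/
def ProperProjTo {a b : ℕ} (X : Set (CE (a + b))) (U : Set (CE a)) : Prop :=
  (∀ z ∈ X, projFst a b z ∈ U) ∧
  ∀ K : Set (CE a), IsCompact K → K ⊆ U → IsCompact {z ∈ X | projFst a b z ∈ K}

/-- Local uniform convergence of the closed subsets `Y ν` of `W` to `Y'`. -/
def LocUnifConvSets {N : ℕ} (W : Set (CE N)) (Y : ℕ → Set (CE N)) (Y' : Set (CE N)) : Prop :=
  (∀ a ∈ Y', ∃ u : ℕ → CE N, (∀ ν, u ν ∈ Y ν) ∧ Tendsto u atTop (𝓝 a)) ∧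
  ∀ K : Set (CE N), IsCompact K → K ⊆ W → K ∩ Y' = ∅ → ∀ᶠ ν in atTop, K ∩ Y ν = ∅

/-- `X` and `T` meet transversally at `a`: their tangent spaces at `a` span `ℂ^N`. -/
def TransversalAt {N : ℕ} (X T : Set (CE N)) (a : CE N) : Prop :=
  Submodule.span ℂ (tangentConeAt ℂ X a ∪ tangentConeAt ℂ T a) = ⊤

/-- `T` is a `d`-dimensional complex submanifold of the open set `W`. -/
def IsSubmanifoldOfDim {N : ℕ} (W T : Set (CE N)) (d : ℕ) : Prop :=
  T ⊆ W ∧ ∀ a ∈ T, IsSubmanifoldPtOfDim T d a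

/-- Convergence, in the open set `W ⊆ ℂ^N`, of the purely `k`-dimensional analytic sets `Z ν`
to the purely `k`-dimensional analytic set `Z'` in the sense of holomorphic chains (all
multiplicities being `1`): local uniform convergence of supports, together with the degree
condition: for every regular point `a` of `Z'` and every `(N-k)`-dimensional submanifold `T`
transversal to `Z'` at `a`, with compact closure contained in `W` and meeting `Z'` only at `a`
(so that `deg(Z' · T) = 1`), for almost all `ν` the chain `Z ν · T` also has degree one, i.e.
`Z ν` meets `T` in exactly one point, which is a regular point of `Z ν` where the intersection
is transversal. -/
def ChainsConvTo {N : ℕ} (W : Set (CE N)) (k : ℕ) (Z : ℕ → Set (CE N))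
    (Z' : Set (CE N)) : Prop :=
  LocUnifConvSets W Z Z' ∧
  ∀ (a : CE N) (T : Set (CE N)), a ∈ Z' → IsSubmanifoldPtOfDim Z' k a →
    IsSubmanifoldOfDim W T (N - k) → IsCompact (closure T) → closure T ⊆ W →
    Z' ∩ closure T = {a} → TransversalAt Z' T a →
    ∀ᶠ ν in atTop, ∃ b, Z ν ∩ T = {b} ∧ IsSubmanifoldPtOfDim (Z ν) k b ∧
      TransversalAt (Z ν) T b

/-- A polynomial polyhedron in `ℂ^N`: a set of the form `{z : |q₁ z| ≤ c₁, …, |q_s z| ≤ c_s}`. -/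
def IsPolyPolyhedron {N : ℕ} (P : Set (CE N)) : Prop :=
  ∃ (s : Finset (MvPolynomial (Fin N) ℂ)) (c : MvPolynomial (Fin N) ℂ → ℝ),
    P = {z | ∀ q ∈ s, ‖eval z q‖ ≤ c q}

/-- A compact set `K ⊆ ℂ^N` is polynomially convex: it equals its polynomially convex hull. -/
def PolyConvex {N : ℕ} (K : Set (CE N)) : Prop :=
  K = {z | ∀ p : MvPolynomial (Fin N) ℂ,
    ‖eval z p‖ ≤ sSup ((fun w => ‖eval w p‖) '' K)}

/-- Sign condition used in the definition of semialgebraic sets. -/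
def signCond (c : Ordering) (t : ℝ) : Prop :=
  match c with
  | .lt => t < 0
  | .eq => t = 0
  | .gt => 0 < t

/-- Evaluation of a real polynomial in the `2m` real coordinates of `z ∈ ℂ^m`. -/
def realizeRe {m : ℕ} (p : MvPolynomial (Fin m ⊕ Fin m) ℝ) (z : CE m) : ℝ :=
  MvPolynomial.eval (Sum.elim (fun i => (z i).re) (fun i => (z i).im)) p

/-- A subset of `ℂ^m ≅ ℝ^{2m}` is semialgebraic: a finite union of finite intersections of
sets defined by polynomial sign conditions in the real coordinates. -/
def IsSemialgebraic {m : ℕ} (S : Set (CE m)) : Prop :=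
  ∃ (n r : ℕ) (P : Fin n → Fin r → MvPolynomial (Fin m ⊕ Fin m) ℝ)
    (σ : Fin n → Fin r → Ordering),
    S = ⋃ i, ⋂ j, {z | signCond (σ i j) (realizeRe (P i j) z)}

end

noncomputable section Aux

/-- A compact polynomial polyhedron is polynomially convex. -/
lemma polyConvex_of_compact_polyhedron {N : ℕ} {K : Set (CE N)} (hc : IsCompact K)
    (h : IsPolyPolyhedron K) : PolyConvex K := by
  obtain ⟨s, c, hK⟩ := h
  show K = _
  ext z
  constructor
  · intro hz p
    exact le_csSup ((hc.image (continuous_norm.comp (MvPolynomial.continuous_eval p))).bddAbove)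
      ⟨z, hz, rfl⟩
  · intro hz
    rcases K.eq_empty_or_nonempty with hK0 | hK0
    · exfalso
      have h1 := hz 1
      rw [hK0] at h1
      simp [Real.sSup_empty] at h1
      linarith
    · rw [hK]
      intro q hq
      refine le_trans (hz q) (csSup_le (hK0.image _) ?_)
      rintro x ⟨w, hw, rfl⟩
      rw [hK] at hw
      exact hw q hq

/-- Intersecting an algebraic set with the pullback of a polynomial polyhedron along an
injective coordinate inclusion gives a polynomial polyhedron. -/
lemma polyhedron_inter_algebraic {N M : ℕ} (Z : Set (CE N)) (hZ : IsAlgebraicSet Z)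
    (e : Fin M → Fin N) (he : Function.Injective e) (P : Set (CE M)) (hP : IsPolyPolyhedron P) :
    IsPolyPolyhedron {z ∈ Z | (fun i => z (e i)) ∈ P} := by
  obtain ⟨sZ, hsZ⟩ := hZ
  obtain ⟨sP, c, hsP⟩ := hP
  have hri : Function.Injective (MvPolynomial.rename (R := ℂ) e) :=
    MvPolynomial.rename_injective e he
  set ci : MvPolynomial (Fin N) ℂ → ℝ :=
    fun r => c (Function.invFun (MvPolynomial.rename (R := ℂ) e) r) with hci
  have hev : ∀ (z' : CE N) (q : MvPolynomial (Fin M) ℂ),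
      MvPolynomial.eval (fun i => z' (e i)) q = MvPolynomial.eval z' (MvPolynomial.rename e q) :=
    fun z' q => (MvPolynomial.eval_rename e z' q).symm
  have hcir : ∀ q : MvPolynomial (Fin M) ℂ, ci (MvPolynomial.rename e q) = c q := by
    intro q
    simp only [hci]
    rw [Function.leftInverse_invFun hri q]
  refine ⟨sZ ∪ sP.image (MvPolynomial.rename e),
    fun r => if r ∈ sZ then
      (if r ∈ sP.image (MvPolynomial.rename e) then min 0 (ci r) else 0) else ci r, ?_⟩
  ext z
  simp only [Set.mem_setOf_eq, hsZ, hsP, Finset.mem_union]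
  constructor
  · rintro ⟨h1, h2⟩ r hr
    rcases Classical.em (r ∈ sZ) with hz1 | hz1
    · have h0 : MvPolynomial.eval z r = 0 := h1 r hz1
      rw [h0, norm_zero, if_pos hz1]
      rcases Classical.em (r ∈ sP.image (MvPolynomial.rename e)) with hz2 | hz2
      · rw [if_pos hz2]
        obtain ⟨q, hq, rfl⟩ := Finset.mem_image.mp hz2
        have := h2 q hq
        rw [hev, h0, norm_zero] at this
        rw [hcir]
        exact le_min le_rfl this
      · rw [if_neg hz2]
    · rcases hr with hr | hr
      · exact absurd hr hz1
      · rw [if_neg hz1]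
        obtain ⟨q, hq, rfl⟩ := Finset.mem_image.mp hr
        rw [hcir, ← hev]
        exact h2 q hq
  · intro h
    constructor
    · intro p hp
      have := h p (Or.inl hp)
      rw [if_pos hp] at this
      have hle : ‖MvPolynomial.eval z p‖ ≤ 0 := by
        rcases Classical.em (p ∈ sP.image (MvPolynomial.rename e)) with hz2 | hz2
        · rw [if_pos hz2] at this; exact this.trans (min_le_left _ _)
        · rwa [if_neg hz2] at this
      exact norm_le_zero_iff.mp hle
    · intro q hq
      have hmem : MvPolynomial.rename e q ∈ sP.image (MvPolynomial.rename e) :=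
        Finset.mem_image_of_mem _ hq
      have := h _ (Or.inr hmem)
      rw [hev]
      refine le_trans this ?_
      rcases Classical.em (MvPolynomial.rename e q ∈ sZ) with hz1 | hz1
      · rw [if_pos hz1, if_pos hmem, hcir]; exact (min_le_right _ _)
      · rw [if_neg hz1, hcir]

end Aux

/-- Let `Z ⊆ ℂ^{m+1} × ℂ^n` be algebraic with proper projection onto
`ℂ^{m+1}`, such that `π(Z)` is an algebraic subset of `ℂ^m × ℂ` with proper projection onto
`ℂ^m`, and let `P ⊆ ℂ^m` be a compact polynomial polyhedron. Then there are `s, s̃ > 0` with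
`Z ∩ (P × ℂ × ℂ^n) = Z ∩ (P × cl B₁(s) × cl B_n(s̃))`, and this set is a compact polynomial
polyhedron, in particular a polynomially convex compact set. -/
theorem polyhedron_over_polyhedron (m n : ℕ) (Z : Set (CE (m + 1 + n)))
    (hZ : IsAlgebraicSet Z)
    (hZproper : ProperProjTo Z (univ : Set (CE (m + 1))))
    (hπZalg : IsAlgebraicSet (projFst (m + 1) n '' Z))
    (hπZproper : ProperProjTo (projFst (m + 1) n '' Z) (univ : Set (CE m)))
    (P : Set (CE m)) (hP : IsPolyPolyhedron P) (hPc : IsCompact P) :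
    ∃ s stil : ℝ, 0 < s ∧ 0 < stil ∧
      {z ∈ Z | projFst m 1 (projFst (m + 1) n z) ∈ P} =
        {z ∈ Z | projFst m 1 (projFst (m + 1) n z) ∈ P ∧
          projFst (m + 1) n z (Fin.last m) ∈ closure (Metric.ball (0 : ℂ) s) ∧
          projSnd (m + 1) n z ∈ closure (eball n stil)} ∧
      IsPolyPolyhedron {z ∈ Z | projFst m 1 (projFst (m + 1) n z) ∈ P} ∧
      IsCompact {z ∈ Z | projFst m 1 (projFst (m + 1) n z) ∈ P} ∧
      PolyConvex {z ∈ Z | projFst m 1 (projFst (m + 1) n z) ∈ P} := by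
  -- Compactness of the set
  have hL : IsCompact {w ∈ projFst (m + 1) n '' Z | projFst m 1 w ∈ P} :=
    hπZproper.2 P hPc (subset_univ P)
  have hKc : IsCompact {z ∈ Z | projFst m 1 (projFst (m + 1) n z) ∈ P} := by
    have h2 := hZproper.2 _ hL (subset_univ _)
    have heq : {z ∈ Z | projFst (m + 1) n z ∈
        {w ∈ projFst (m + 1) n '' Z | projFst m 1 w ∈ P}} =
        {z ∈ Z | projFst m 1 (projFst (m + 1) n z) ∈ P} := by
      ext z
      simp only [Set.mem_setOf_eq]
      exact ⟨fun ⟨h1, _, h3⟩ => ⟨h1, h3⟩, fun ⟨h1, h3⟩ => ⟨h1, ⟨z, h1, rfl⟩, h3⟩⟩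
    rwa [heq] at h2
  -- Polyhedron property
  have heinj : Function.Injective (fun i : Fin m => Fin.castAdd n (Fin.castAdd 1 i)) := by
    intro a b hab
    have : ((a : ℕ) : ℕ) = (b : ℕ) := by
      simpa using congrArg Fin.val hab
    exact Fin.ext this
  have hpoly : IsPolyPolyhedron {z ∈ Z | projFst m 1 (projFst (m + 1) n z) ∈ P} :=
    polyhedron_inter_algebraic Z hZ _ heinj P hP
  -- Bound
  obtain ⟨r, hr⟩ := hKc.isBounded.subset_closedBall 0
  set R : ℝ := max r 0 + 1 with hRdef
  have hR : 0 < R := by positivity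
  have hzR : ∀ z ∈ {z ∈ Z | projFst m 1 (projFst (m + 1) n z) ∈ P}, ‖z‖ < R := by
    intro z hz
    have := hr hz
    rw [Metric.mem_closedBall, dist_zero_right] at this
    calc ‖z‖ ≤ r := this
      _ ≤ max r 0 := le_max_left _ _
      _ < R := by rw [hRdef]; linarith
  refine ⟨R, (n + 1) * R, hR, by positivity, ?_, hpoly, hKc,
    polyConvex_of_compact_polyhedron hKc hpoly⟩
  ext z
  simp only [Set.mem_setOf_eq]
  constructor
  · rintro ⟨h1, h2⟩
    have hzn : ‖z‖ < R := hzR z ⟨h1, h2⟩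
    refine ⟨h1, h2, ?_, ?_⟩
    · rw [closure_ball (0 : ℂ) (ne_of_gt hR), Metric.mem_closedBall, dist_zero_right]
      exact le_of_lt (lt_of_le_of_lt (norm_le_pi_norm z _) hzn)
    · refine subset_closure ?_
      show ∑ i : Fin n, ‖projSnd (m + 1) n z i‖ ^ 2 < ((n + 1 : ℝ) * R) ^ 2
      have hsum : ∑ i : Fin n, ‖projSnd (m + 1) n z i‖ ^ 2 ≤ (n : ℝ) * R ^ 2 := by
        calc ∑ i : Fin n, ‖projSnd (m + 1) n z i‖ ^ 2
            ≤ ∑ _i : Fin n, R ^ 2 := by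
              refine Finset.sum_le_sum fun i _ => ?_
              have h1 : ‖projSnd (m + 1) n z i‖ ≤ ‖z‖ := norm_le_pi_norm z _
              have h2 : ‖projSnd (m + 1) n z i‖ < R := lt_of_le_of_lt h1 hzn
              exact pow_le_pow_left₀ (norm_nonneg _) (le_of_lt h2) 2
          _ = (n : ℝ) * R ^ 2 := by
              rw [Finset.sum_const, Finset.card_univ, Fintype.card_fin]; ring
      have hn : (0 : ℝ) ≤ n := Nat.cast_nonneg n
      nlinarith [hsum, hR, sq_nonneg ((n : ℝ) * R)]
  · rintro ⟨h1, h2, _, _⟩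
    exact ⟨h1, h2⟩
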